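/- Let v : [0,1] → ℝ be convex on [0, x̄] and concave on [x̲, 1] where 0 < x̲ ≤ x̄ < 1, with v affine (equal to the identity) on [x̲, x̄]. Suppose additionally that every supergradient of v at 0 (i.e., every p with v(x) ≤ v(0) + p·x + o(x) as x → 0⁺ admitting a C² upper test function) satisfies p ≥ 0, and every subgradient of v at 1 satisfies p ≥ 0 — as forced by the boundary viscosity conditions. Then v is non-decreasing on [0,1]. -/

import Mathlib

open Set

lemma chordIneq13 {f : ℝ → ℝ} {S : Set ℝ} (hf : ConvexOn ℝ S f) {p q x : ℝ}
    (hp : p ∈ S) (hq : q ∈ S) (hpq : p < q) (hx : x ∈ Icc p q) :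
    f x ≤ f p + (f q - f p) / (q - p) * (x - p) := by
  obtain ⟨hx1, hx2⟩ := hx
  have hq0 : (0:ℝ) < q - p := by linarith
  set t := (x - p) / (q - p) with ht
  have ht0 : 0 ≤ t := div_nonneg (by linarith) hq0.le
  have ht1 : t ≤ 1 := by rw [ht, div_le_one hq0]; linarith
  have hx' : x = (1 - t) * p + t * q := by
    have h' : t * (q - p) = x - p := by rw [ht]; exact div_mul_cancel₀ _ hq0.ne'
    linarith
  have h := hf.2 hp hq (by linarith : (0:ℝ) ≤ 1 - t) ht0 (by ring)
  rw [smul_eq_mul, smul_eq_mul, smul_eq_mul, smul_eq_mul, ← hx'] at h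
  calc f x ≤ (1 - t) * f p + t * f q := h
    _ = f p + (f q - f p) / (q - p) * (x - p) := by
        rw [ht]; field_simp; ring

lemma chordIneq13' {f : ℝ → ℝ} {S : Set ℝ} (hf : ConcaveOn ℝ S f) {p q x : ℝ}
    (hp : p ∈ S) (hq : q ∈ S) (hpq : p < q) (hx : x ∈ Icc p q) :
    f p + (f q - f p) / (q - p) * (x - p) ≤ f x := by
  have h := chordIneq13 hf.neg hp hq hpq hx
  simp only [Pi.neg_apply] at h
  have h2 : (-f q - -f p) / (q - p) * (x - p) = -((f q - f p) / (q - p) * (x - p)) := by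
    ring
  rw [h2] at h
  linarith

lemma quadDeriv13 (a b c x₀ : ℝ) :
    HasDerivAt (fun x : ℝ => a + b * (x - x₀) + c * (x - x₀) ^ 2) b x₀ := by
  have h1 : HasDerivAt (fun x : ℝ => x - x₀) 1 x₀ := (hasDerivAt_id x₀).sub_const x₀
  have h2 := (h1.const_mul b).add ((h1.pow 2).const_mul c)
  have h3 := h2.const_add a
  have heq : (fun x : ℝ => a + b * (x - x₀) + c * (x - x₀) ^ 2)
      = fun x : ℝ => a + (b * (x - x₀) + c * (x - x₀) ^ 2) := by funext x; ring
  rw [heq]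
  simpa using h3

lemma quadCD13 (a b c x₀ : ℝ) :
    ContDiff ℝ 2 (fun x : ℝ => a + b * (x - x₀) + c * (x - x₀) ^ 2) := by
  have h1 : ContDiff ℝ 2 (fun x : ℝ => x - x₀) := contDiff_id.sub contDiff_const
  exact (contDiff_const.add (contDiff_const.mul h1)).add (contDiff_const.mul (h1.pow 2))

set_option maxHeartbeats 1000000 in
/-- Monotonicity of the value function: convex on the left, concave on the
right, identity in the middle, with boundary viscosity conditions forcing
nonnegative slopes at 0 and 1, imply v is non-decreasing on [0,1]. -/
theorem stmt13 (v : ℝ → ℝ) (xlow xbar : ℝ)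
    (h0 : 0 < xlow) (h12 : xlow ≤ xbar) (h1 : xbar < 1)
    (hconv : ConvexOn ℝ (Icc 0 xbar) v)
    (hconc : ConcaveOn ℝ (Icc xlow 1) v)
    (hid : ∀ x ∈ Icc xlow xbar, v x = x)
    (hsuper0 : ∀ φ : ℝ → ℝ, ContDiff ℝ 2 φ → φ 0 = v 0 →
      (∀ x ∈ Icc (0:ℝ) 1, v x ≤ φ x) → 0 ≤ deriv φ 0)
    (hsub1 : ∀ φ : ℝ → ℝ, ContDiff ℝ 2 φ → φ 1 = v 1 →
      (∀ x ∈ Icc (0:ℝ) 1, φ x ≤ v x) → 0 ≤ deriv φ 1) :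
    MonotoneOn v (Icc 0 1) := by
  have hxbar0 : 0 < xbar := lt_of_lt_of_le h0 h12
  have hxlow1 : xlow < 1 := lt_of_le_of_lt h12 h1
  have hvxlow : v xlow = xlow := hid xlow ⟨le_refl _, h12⟩
  have h0S : (0:ℝ) ∈ Icc (0:ℝ) xbar := ⟨le_refl _, hxbar0.le⟩
  have hbS : xbar ∈ Icc (0:ℝ) xbar := ⟨hxbar0.le, le_refl _⟩
  have hlC : xlow ∈ Icc xlow 1 := ⟨le_refl _, hxlow1.le⟩
  have h1C : (1:ℝ) ∈ Icc xlow 1 := ⟨hxlow1.le, le_refl _⟩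
  -- the midpoint of [0, xbar]
  set c : ℝ := xbar / 2 with hcdef
  have hc0 : 0 < c := by positivity
  have hc1 : c < xbar := by rw [hcdef]; linarith
  -- global lower bound m for v on [0,1]
  set mL : ℝ := (-|v c| * xbar - |v xbar| * c) / (xbar - c) with hmL
  set mR : ℝ := (v 0 * c - |v c - v 0| * xbar) / c with hmR
  set mC : ℝ := min xlow (v 1) with hmC
  set m : ℝ := min (min mL mR) mC with hmdef
  have hm : ∀ x ∈ Icc (0:ℝ) 1, m ≤ v x := by
    intro x hx
    rcases le_total x xbar with hxb | hxb
    · have hxS : x ∈ Icc (0:ℝ) xbar := ⟨hx.1, hxb⟩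
      rcases le_total x c with hxc | hxc
      · -- chord on [x, xbar] through c
        have hch := chordIneq13 hconv hxS hbS (lt_of_le_of_lt hxc hc1) ⟨hxc, hc1.le⟩
        have hd0 : (0:ℝ) < xbar - x := by linarith
        have key : (v c - v x) * (xbar - x) ≤ (v xbar - v x) * (c - x) := by
          have h2 : (v xbar - v x) / (xbar - x) * (c - x) * (xbar - x)
              = (v xbar - v x) * (c - x) := by field_simp
          nlinarith [hch]
        have e1 : -|v c| * xbar ≤ v c * (xbar - x) := by
          nlinarith [mul_nonneg (by linarith [neg_abs_le (v c)] : (0:ℝ) ≤ |v c| + v c) hd0.le,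
            mul_nonneg (abs_nonneg (v c)) hx.1]
        have e2 : -|v xbar| * c ≤ -(v xbar * (c - x)) := by
          nlinarith [mul_nonneg (sub_nonneg.2 (le_abs_self (v xbar)))
              (by linarith : (0:ℝ) ≤ c - x),
            mul_nonneg (abs_nonneg (v xbar)) hx.1]
        have hmLx : mL ≤ v x := by
          rw [hmL, div_le_iff₀ (by linarith : (0:ℝ) < xbar - c)]
          nlinarith [key, e1, e2]
        calc m ≤ min mL mR := min_le_left _ _
          _ ≤ mL := min_le_left _ _
          _ ≤ v x := hmLx
      · -- chord on [0, x] through c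
        have hx0 : (0:ℝ) < x := lt_of_lt_of_le hc0 hxc
        have hch := chordIneq13 hconv h0S hxS hx0 ⟨hc0.le, hxc⟩
        have key : (v c - v 0) * x ≤ (v x - v 0) * c := by
          have h2 : (v x - v 0) / (x - 0) * (c - 0) * x = (v x - v 0) * c := by
            rw [sub_zero, sub_zero, div_mul_eq_mul_div, div_mul_cancel₀ _ hx0.ne']
          nlinarith [hch]
        have hmRx : mR ≤ v x := by
          rw [hmR, div_le_iff₀ hc0]
          nlinarith [key, mul_nonneg (by linarith [neg_abs_le (v c - v 0)] :
              (0:ℝ) ≤ |v c - v 0| + (v c - v 0)) hx.1,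
            mul_nonneg (abs_nonneg (v c - v 0)) (by linarith : (0:ℝ) ≤ xbar - x)]
        calc m ≤ min mL mR := min_le_left _ _
          _ ≤ mR := min_le_right _ _
          _ ≤ v x := hmRx
    · -- x ∈ [xbar, 1] ⊆ [xlow, 1]: concave minimum principle
      have hxC : x ∈ Icc xlow 1 := ⟨le_trans h12 hxb, hx.2⟩
      have hmin := hconc.min_le_of_mem_Icc hlC h1C ⟨hxC.1, hxC.2⟩
      rw [hvxlow] at hmin
      calc m ≤ mC := min_le_right _ _
        _ ≤ v x := hmin
  have hm1 : m ≤ v 1 := hm 1 ⟨by norm_num, le_refl _⟩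
  -- Step 1: no point a in [xlow, 1) with v 1 < v a
  have key1 : ∀ a, xlow ≤ a → a < 1 → v a ≤ v 1 := by
    intro a ha ha1
    by_contra hcon
    push_neg at hcon
    set s : ℝ := (v 1 - v a) / (1 - a) with hs
    have hs0 : s < 0 := div_neg_of_neg_of_pos (by linarith) (by linarith)
    set C : ℝ := (v 1 - s - m) / (1 - a) ^ 2 with hC
    have hC0 : 0 ≤ C := by
      apply div_nonneg (by linarith) (by positivity)
    set φ : ℝ → ℝ := fun x => v 1 + s * (x - 1) + (-C) * (x - 1) ^ 2 with hφ
    have hcd : ContDiff ℝ 2 φ := quadCD13 (v 1) s (-C) 1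
    have hφ1 : φ 1 = v 1 := by rw [hφ]; norm_num
    have hCeq : C * (1 - a) ^ 2 = v 1 - s - m := by
      rw [hC, div_mul_cancel₀]
      exact ne_of_gt (pow_pos (by linarith) 2)
    have hle : ∀ x ∈ Icc (0:ℝ) 1, φ x ≤ v x := by
      intro x hx
      rcases le_total x a with hxa | hxa
      · -- on [0, a]: φ x ≤ m ≤ v x
        have hmx := hm x hx
        have hsq : (1 - a) ^ 2 ≤ (x - 1) ^ 2 := by nlinarith [hx.1]
        have h4 : C * (1 - a) ^ 2 ≤ C * (x - 1) ^ 2 := by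
          exact mul_le_mul_of_nonneg_left hsq hC0
        have h5 : s * (x - 1) ≤ -s := by nlinarith [hx.1]
        rw [hφ]
        simp only
        nlinarith [hmx, h4, h5, hCeq]
      · -- on [a, 1]: below the chord
        have haC : a ∈ Icc xlow 1 := ⟨ha, ha1.le⟩
        have hch := chordIneq13' hconc haC h1C (by linarith) ⟨hxa, hx.2⟩
        have hne : (1:ℝ) - a ≠ 0 := by intro h; rw [sub_eq_zero] at h; exact absurd h.symm ha1.ne
        have heq : v 1 + s * (x - 1) = v a + (v 1 - v a) / (1 - a) * (x - a) := by
          rw [hs]; field_simp; ring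
        have h6 : (-C) * (x - 1) ^ 2 ≤ 0 := by nlinarith [sq_nonneg (x - 1)]
        rw [hφ]
        simp only
        linarith [hch, h6, heq.le, heq.ge]
    have hd : deriv φ 1 = s := (quadDeriv13 (v 1) s (-C) 1).deriv
    have := hsub1 φ hcd hφ1 hle
    rw [hd] at this
    linarith
  -- monotone on [xlow, 1]
  have mono1 : ∀ a ∈ Icc xlow 1, ∀ b ∈ Icc xlow 1, a ≤ b → v a ≤ v b := by
    intro a ha b hb hab
    rcases eq_or_lt_of_le hab with rfl | hab'
    · exact le_refl _
    · by_contra hcon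
      push_neg at hcon
      have ha1 : a < 1 := lt_of_lt_of_le hab' hb.2
      have haC : a ∈ Icc xlow 1 := ⟨ha.1, ha1.le⟩
      have hmin := hconc.min_le_of_mem_Icc haC h1C ⟨hab, hb.2⟩
      have hva1 : v a ≤ v 1 := key1 a ha.1 ha1
      rcases min_le_iff.1 (le_refl (min (v a) (v 1))) with _ | _
      · rcases le_total (v a) (v 1) with hl | hl
        · rw [min_eq_left hl] at hmin; linarith
        · rw [min_eq_right hl] at hmin; linarith
      · rcases le_total (v a) (v 1) with hl | hl
        · rw [min_eq_left hl] at hmin; linarith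
        · rw [min_eq_right hl] at hmin; linarith
  -- global upper bound M for v on [0,1]
  set M : ℝ := max (max (v 0) (v xbar)) (v 1) with hMdef
  have hM : ∀ x ∈ Icc (0:ℝ) 1, v x ≤ M := by
    intro x hx
    rcases le_total x xbar with hxb | hxb
    · have := hconv.le_max_of_mem_Icc h0S hbS ⟨hx.1, hxb⟩
      calc v x ≤ max (v 0) (v xbar) := this
        _ ≤ M := le_max_left _ _
    · have hxC : x ∈ Icc xlow 1 := ⟨le_trans h12 hxb, hx.2⟩
      have := mono1 x hxC 1 h1C hx.2
      calc v x ≤ v 1 := this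
        _ ≤ M := le_max_right _ _
  have hMv0 : v 0 ≤ M := le_trans (le_max_left _ _) (le_max_left _ _)
  -- Step 2: no point b in (0, xbar] with v b < v 0
  have key2 : ∀ b, 0 < b → b ≤ xbar → v 0 ≤ v b := by
    intro b hb0 hbxb
    by_contra hcon
    push_neg at hcon
    set s : ℝ := (v b - v 0) / b with hs
    have hs0 : s < 0 := div_neg_of_neg_of_pos (by linarith) hb0
    set C : ℝ := (M - v 0 - s) / b ^ 2 with hC
    have hC0 : 0 ≤ C := by
      apply div_nonneg (by linarith) (by positivity)
    set φ : ℝ → ℝ := fun x => v 0 + s * (x - 0) + C * (x - 0) ^ 2 with hφ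
    have hcd : ContDiff ℝ 2 φ := quadCD13 (v 0) s C 0
    have hφ0 : φ 0 = v 0 := by rw [hφ]; norm_num
    have hCeq : C * b ^ 2 = M - v 0 - s := by
      rw [hC, div_mul_cancel₀]
      exact ne_of_gt (pow_pos hb0 2)
    have hbsS : b ∈ Icc (0:ℝ) xbar := ⟨hb0.le, hbxb⟩
    have hge : ∀ x ∈ Icc (0:ℝ) 1, v x ≤ φ x := by
      intro x hx
      rcases le_total x b with hxb2 | hxb2
      · have hch := chordIneq13 hconv h0S hbsS hb0 ⟨hx.1, hxb2⟩
        have heq : v 0 + (v b - v 0) / (b - 0) * (x - 0) = v 0 + s * (x - 0) := by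
          rw [hs]; norm_num
        have h6 : 0 ≤ C * (x - 0) ^ 2 := by positivity
        rw [hφ]
        simp only
        linarith [hch, heq.le, heq.ge, h6]
      · have hMx := hM x hx
        have hsq : b ^ 2 ≤ (x - 0) ^ 2 := by nlinarith [hb0]
        have h4 : C * b ^ 2 ≤ C * (x - 0) ^ 2 := mul_le_mul_of_nonneg_left hsq hC0
        have h5 : s ≤ s * (x - 0) := by nlinarith [hx.2]
        rw [hφ]
        simp only
        linarith [hMx, h4, h5, hCeq]
    have hd : deriv φ 0 = s := (quadDeriv13 (v 0) s C 0).deriv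
    have := hsuper0 φ hcd hφ0 hge
    rw [hd] at this
    linarith
  -- monotone on [0, xbar]
  have mono2 : ∀ a ∈ Icc (0:ℝ) xbar, ∀ b ∈ Icc (0:ℝ) xbar, a ≤ b → v a ≤ v b := by
    intro a ha b hb hab
    rcases eq_or_lt_of_le hab with rfl | hab'
    · exact le_refl _
    · by_contra hcon
      push_neg at hcon
      have hb0 : 0 < b := lt_of_le_of_lt ha.1 hab'
      have hbS2 : b ∈ Icc (0:ℝ) xbar := hb
      have hmax := hconv.le_max_of_mem_Icc h0S hbS2 ⟨ha.1, hab⟩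
      have hv0b : v 0 ≤ v b := key2 b hb0 hb.2
      rcases le_total (v 0) (v b) with hl | hl
      · rw [max_eq_right hl] at hmax; linarith
      · rw [max_eq_left hl] at hmax; linarith
  -- assemble
  intro a ha b hb hab
  rcases le_or_gt b xbar with hbx | hbx
  · exact mono2 a ⟨ha.1, le_trans hab hbx⟩ b ⟨hb.1, hbx⟩ hab
  · rcases le_or_gt xlow a with hxa | hxa
    · exact mono1 a ⟨hxa, ha.2⟩ b ⟨le_trans h12 hbx.le, hb.2⟩ hab
    · have h7 : v a ≤ v xlow :=
        mono2 a ⟨ha.1, le_trans hxa.le h12⟩ xlow ⟨h0.le, h12⟩ hxa.le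
      have h8 : v xlow ≤ v b :=
        mono1 xlow hlC b ⟨le_trans h12 hbx.le, hb.2⟩ (le_trans h12 hbx.le)
      linarith
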